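/- Policy gradient identity for a finite-horizon finite MDP: with the finite-MDP setup below, the value function J(w) = Σ_τ q(τ; w) R(τ) is differentiable in w, and its gradient equals the score-weighted reward-to-go sum: ∇J(w) = Σ_τ q(τ; w) Σ_{h=0}^{H−1} ∇_w log π(a_h | s_h; w) · R^h(τ), where the sums over τ range over all trajectories (a finite set). -/

import Mathlib

open Finset
open Finset
section
variable {S A : Type*} [Fintype S] [Fintype A]

private lemma sum_cons_aux {X M : Type*} [Fintype X] [AddCommMonoid M] (n : ℕ)
    (F : (Fin (n + 1) → X) → M) :
    ∑ f : Fin (n + 1) → X, F f = ∑ x : X, ∑ g : Fin n → X, F (Fin.cons x g) := by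
  rw [← Equiv.sum_comp (Fin.consEquiv fun _ => X) F, Fintype.sum_prod_type]
  rfl

private lemma tail_sum {S A : Type*} [Fintype S] [Fintype A]
    (p : A → S → ℝ) (P : S → A → S → ℝ)
    (hp1 : ∀ s, ∑ a, p a s = 1) (hP1 : ∀ s a, ∑ s', P s a s' = 1) :
    ∀ (n : ℕ) (ν : S → ℝ),
      ∑ s : Fin (n + 1) → S, ∑ a : Fin n → A,
        ν (s 0) * ((∏ j : Fin n, p (a j) (s j.castSucc)) *
          ∏ j : Fin n, P (s j.castSucc) (a j) (s j.succ)) = ∑ x, ν x := by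
  intro n
  induction n with
  | zero =>
    intro ν
    rw [sum_cons_aux]
    simp
  | succ m ih =>
    intro ν
    rw [sum_cons_aux]
    refine Finset.sum_congr rfl fun s0 _ => ?_
    rw [Finset.sum_comm, sum_cons_aux]
    have key : ∀ a0 : A, ∑ a' : Fin m → A, ∑ s' : Fin (m + 1) → S,
        ν ((Fin.cons s0 s' : Fin (m+2) → S) 0) *
          ((∏ j : Fin (m+1), p ((Fin.cons a0 a' : Fin (m+1) → A) j) ((Fin.cons s0 s' : Fin (m+2) → S) j.castSucc)) *
            ∏ j : Fin (m+1), P ((Fin.cons s0 s' : Fin (m+2) → S) j.castSucc) ((Fin.cons a0 a' : Fin (m+1) → A) j)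
              ((Fin.cons s0 s' : Fin (m+2) → S) j.succ)) = ν s0 * p a0 s0 := by
      intro a0
      rw [Finset.sum_comm]
      simp only [Fin.prod_univ_succ, Fin.cons_zero, Fin.cons_succ, Fin.castSucc_zero,
        ← Fin.succ_castSucc]
      calc ∑ s' : Fin (m+1) → S, ∑ a' : Fin m → A,
            ν s0 * ((p a0 s0 * ∏ j : Fin m, p (a' j) (s' j.castSucc)) *
              (P s0 a0 (s' 0) * ∏ j : Fin m, P (s' j.castSucc) (a' j) (s' j.succ)))
          = ∑ s' : Fin (m+1) → S, ∑ a' : Fin m → A,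
            (ν s0 * p a0 s0) * ((fun x => P s0 a0 x) (s' 0) *
              ((∏ j : Fin m, p (a' j) (s' j.castSucc)) *
                ∏ j : Fin m, P (s' j.castSucc) (a' j) (s' j.succ))) := by
            refine Finset.sum_congr rfl fun s' _ => Finset.sum_congr rfl fun a' _ => ?_
            ring
        _ = (ν s0 * p a0 s0) * ∑ s' : Fin (m+1) → S, ∑ a' : Fin m → A,
            (fun x => P s0 a0 x) (s' 0) *
              ((∏ j : Fin m, p (a' j) (s' j.castSucc)) *
                ∏ j : Fin m, P (s' j.castSucc) (a' j) (s' j.succ)) := by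
            rw [Finset.mul_sum]
            exact Finset.sum_congr rfl fun s' _ => by rw [Finset.mul_sum]
        _ = ν s0 * p a0 s0 := by rw [ih (fun x => P s0 a0 x), hP1, mul_one]
    calc ∑ a0 : A, ∑ a' : Fin m → A, ∑ s' : Fin (m + 1) → S,
          ν ((Fin.cons s0 s' : Fin (m+2) → S) 0) *
            ((∏ j : Fin (m+1), p ((Fin.cons a0 a' : Fin (m+1) → A) j) ((Fin.cons s0 s' : Fin (m+2) → S) j.castSucc)) *
              ∏ j : Fin (m+1), P ((Fin.cons s0 s' : Fin (m+2) → S) j.castSucc) ((Fin.cons a0 a' : Fin (m+1) → A) j)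
                ((Fin.cons s0 s' : Fin (m+2) → S) j.succ))
        = ∑ a0 : A, ν s0 * p a0 s0 := Finset.sum_congr rfl fun a0 _ => key a0
      _ = ν s0 := by rw [← Finset.mul_sum, hp1, mul_one]

private lemma vanish {E : Type*} [AddCommGroup E] [Module ℝ E] [Nonempty A]
    (p : A → S → ℝ) (P : S → A → S → ℝ) (g : A → S → E)
    (hp1 : ∀ s, ∑ a, p a s = 1) (hP1 : ∀ s a, ∑ s', P s a s' = 1)
    (hscore : ∀ s, ∑ a, p a s • g a s = 0) :
    ∀ (h n : ℕ) (hh : h < n) (ν : S → ℝ)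
      (ψ : (Fin (n + 1) → S) → (Fin n → A) → ℝ),
      (∀ s s' a a', (∀ l : Fin (n + 1), (l : ℕ) ≤ h → s l = s' l) →
          (∀ l : Fin n, (l : ℕ) < h → a l = a' l) → ψ s a = ψ s' a') →
      ∑ s : Fin (n + 1) → S, ∑ a : Fin n → A,
        (ν (s 0) * ((∏ j : Fin n, p (a j) (s j.castSucc)) *
            ∏ j : Fin n, P (s j.castSucc) (a j) (s j.succ)) * ψ s a) •
          g (a ⟨h, hh⟩) (s ⟨h, Nat.lt_succ_of_lt hh⟩) = 0 := by
  intro h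
  induction h with
  | zero =>
    rintro (_ | m) hh ν ψ hψ
    · omega
    · set ψ0 : S → ℝ := fun x => ψ (fun _ => x) (fun _ => Classical.arbitrary A) with hψ0def
      have hψ0 : ∀ (s0 : S) (s' : Fin (m + 1) → S) (a0 : A) (a' : Fin m → A),
          ψ (Fin.cons s0 s') (Fin.cons a0 a') = ψ0 s0 := by
        intro s0 s' a0 a'
        refine hψ _ _ _ _ (fun l hl => ?_) (fun l hl => by simp at hl)
        have : l = 0 := Fin.ext (by simp only [Fin.val_zero]; omega)
        subst this
        simp
      rw [sum_cons_aux]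
      refine Finset.sum_eq_zero fun s0 _ => ?_
      rw [Finset.sum_comm, sum_cons_aux]
      calc ∑ a0 : A, ∑ a' : Fin m → A, ∑ s' : Fin (m + 1) → S,
            ((fun s : Fin (m + 2) → S => fun a : Fin (m+1) → A =>
              (ν (s 0) * ((∏ j : Fin (m+1), p (a j) (s j.castSucc)) *
                ∏ j : Fin (m+1), P (s j.castSucc) (a j) (s j.succ)) * ψ s a) •
              g (a ⟨0, hh⟩) (s ⟨0, Nat.lt_succ_of_lt hh⟩))
              (Fin.cons s0 s') (Fin.cons a0 a'))
          = ∑ a0 : A, (ν s0 * ψ0 s0) • (p a0 s0 • g a0 s0) := ?_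
        _ = 0 := by
            rw [← Finset.smul_sum, hscore, smul_zero]
      refine Finset.sum_congr rfl fun a0 _ => ?_
      rw [Finset.sum_comm]
      simp only [Fin.prod_univ_succ, Fin.cons_zero, Fin.cons_succ, Fin.castSucc_zero,
        ← Fin.succ_castSucc, Fin.mk_zero, hψ0]
      calc ∑ s' : Fin (m + 1) → S, ∑ a' : Fin m → A,
            (ν s0 * ((p a0 s0 * ∏ j : Fin m, p (a' j) (s' j.castSucc)) *
              (P s0 a0 (s' 0) * ∏ j : Fin m, P (s' j.castSucc) (a' j) (s' j.succ))) *
              ψ0 s0) • g a0 s0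
          = (∑ s' : Fin (m + 1) → S, ∑ a' : Fin m → A,
              (ν s0 * ψ0 s0 * p a0 s0) * ((fun x => P s0 a0 x) (s' 0) *
                ((∏ j : Fin m, p (a' j) (s' j.castSucc)) *
                  ∏ j : Fin m, P (s' j.castSucc) (a' j) (s' j.succ)))) • g a0 s0 := by
            rw [Finset.sum_smul]
            refine Finset.sum_congr rfl fun s' _ => ?_
            rw [Finset.sum_smul]
            refine Finset.sum_congr rfl fun a' _ => ?_
            congr 1
            ring
        _ = (ν s0 * ψ0 s0) • (p a0 s0 • g a0 s0) := by
            rw [smul_smul]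
            congr 1
            calc (∑ s' : Fin (m + 1) → S, ∑ a' : Fin m → A,
                  (ν s0 * ψ0 s0 * p a0 s0) * ((fun x => P s0 a0 x) (s' 0) *
                    ((∏ j : Fin m, p (a' j) (s' j.castSucc)) *
                      ∏ j : Fin m, P (s' j.castSucc) (a' j) (s' j.succ))))
                = (ν s0 * ψ0 s0 * p a0 s0) *
                    ∑ s' : Fin (m + 1) → S, ∑ a' : Fin m → A,
                    ((fun x => P s0 a0 x) (s' 0) *
                      ((∏ j : Fin m, p (a' j) (s' j.castSucc)) *
                        ∏ j : Fin m, P (s' j.castSucc) (a' j) (s' j.succ))) := by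
                  rw [Finset.mul_sum]
                  exact Finset.sum_congr rfl fun s' _ => by rw [Finset.mul_sum]
              _ = ν s0 * ψ0 s0 * p a0 s0 := by
                  rw [tail_sum p P hp1 hP1 m (fun x => P s0 a0 x), hP1, mul_one]
  | succ h ih =>
    rintro (_ | m) hh ν ψ hψ
    · omega
    · have hm : h < m := by omega
      rw [sum_cons_aux]
      refine Finset.sum_eq_zero fun s0 _ => ?_
      rw [Finset.sum_comm, sum_cons_aux]
      refine Finset.sum_eq_zero fun a0 _ => ?_
      rw [Finset.sum_comm]
      have e2 : (⟨h + 1, Nat.lt_succ_of_lt hh⟩ : Fin (m + 2)) =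
          Fin.succ ⟨h, Nat.lt_succ_of_lt hm⟩ := rfl
      have e1 : (⟨h + 1, hh⟩ : Fin (m + 1)) = Fin.succ ⟨h, hm⟩ := rfl
      have hψ' : ∀ s s' a a', (∀ l : Fin (m + 1), (l : ℕ) ≤ h → s l = s' l) →
          (∀ l : Fin m, (l : ℕ) < h → a l = a' l) →
          ψ (Fin.cons s0 s) (Fin.cons a0 a) = ψ (Fin.cons s0 s') (Fin.cons a0 a') := by
        intro s s' a a' hs ha
        refine hψ _ _ _ _ (fun l hl => ?_) (fun l hl => ?_)
        · rcases Fin.eq_zero_or_eq_succ l with rfl | ⟨j, rfl⟩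
          · simp
          · simp only [Fin.cons_succ]
            exact hs j (by simp [Fin.val_succ] at hl; omega)
        · rcases Fin.eq_zero_or_eq_succ l with rfl | ⟨j, rfl⟩
          · simp
          · simp only [Fin.cons_succ]
            exact ha j (by simp [Fin.val_succ] at hl; omega)
      calc ∑ s' : Fin (m + 1) → S, ∑ a' : Fin m → A,
            ((fun s : Fin (m + 2) → S => fun a : Fin (m+1) → A =>
              (ν (s 0) * ((∏ j : Fin (m+1), p (a j) (s j.castSucc)) *
                ∏ j : Fin (m+1), P (s j.castSucc) (a j) (s j.succ)) * ψ s a) •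
              g (a ⟨h + 1, hh⟩) (s ⟨h + 1, Nat.lt_succ_of_lt hh⟩))
              (Fin.cons s0 s') (Fin.cons a0 a'))
          = ∑ s' : Fin (m + 1) → S, ∑ a' : Fin m → A,
            (((fun x => ν s0 * p a0 s0 * P s0 a0 x) (s' 0)) *
              ((∏ j : Fin m, p (a' j) (s' j.castSucc)) *
                ∏ j : Fin m, P (s' j.castSucc) (a' j) (s' j.succ)) *
              ((fun sf : Fin (m + 1) → S => fun af : Fin m → A =>
                ψ (Fin.cons s0 sf) (Fin.cons a0 af)) s' a')) •
              g (a' ⟨h, hm⟩) (s' ⟨h, Nat.lt_succ_of_lt hm⟩) := ?_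
        _ = 0 := ih m hm (fun x => ν s0 * p a0 s0 * P s0 a0 x)
              (fun sf af => ψ (Fin.cons s0 sf) (Fin.cons a0 af))
              hψ'
      refine Finset.sum_congr rfl fun s' _ => Finset.sum_congr rfl fun a' _ => ?_
      simp only [e1, e2, Fin.prod_univ_succ, Fin.cons_zero, Fin.cons_succ, Fin.castSucc_zero,
        ← Fin.succ_castSucc]
      congr 1
      ring
end

/-- Policy gradient identity for a finite-horizon finite MDP:
`∇J(w) = Σ_τ q(τ;w) Σ_h ∇_w log π(a_h|s_h;w) · R^h(τ)`. -/
theorem policy_gradient_identity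
    (S A : Type*) [Fintype S] [Fintype A] [Nonempty S] [Nonempty A]
    (H d : ℕ) (hH : 0 < H) (hd : 0 < d)
    (μ : S → ℝ) (hμ0 : ∀ s, 0 ≤ μ s) (hμ1 : ∑ s, μ s = 1)
    (P : S → A → S → ℝ) (hP0 : ∀ s a s', 0 ≤ P s a s')
    (hP1 : ∀ s a, ∑ s', P s a s' = 1)
    (r : S → A → ℝ) (γ : ℝ) (hγ0 : 0 < γ) (hγ1 : γ < 1)
    (π : A → S → EuclideanSpace ℝ (Fin d) → ℝ)
    (hπ0 : ∀ a s w, 0 < π a s w) (hπ1 : ∀ s w, ∑ a, π a s w = 1)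
    (hπC : ∀ a s, ContDiff ℝ 1 (fun w => Real.log (π a s w)))
    (q : ((Fin (H + 1) → S) × (Fin H → A)) → EuclideanSpace ℝ (Fin d) → ℝ)
    (hq : ∀ τ w, q τ w =
      μ (τ.1 0) * (∏ h : Fin H, π (τ.2 h) (τ.1 h.castSucc) w)
        * ∏ h : Fin H, P (τ.1 h.castSucc) (τ.2 h) (τ.1 h.succ))
    (Rew : ((Fin (H + 1) → S) × (Fin H → A)) → ℝ)
    (hRew : ∀ τ, Rew τ = ∑ h : Fin H, γ ^ (h : ℕ) * r (τ.1 h.castSucc) (τ.2 h))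
    (Rtg : Fin H → ((Fin (H + 1) → S) × (Fin H → A)) → ℝ)
    (hRtg : ∀ h τ, Rtg h τ =
      ∑ l ∈ Finset.univ.filter (fun l : Fin H => h ≤ l),
        γ ^ (l : ℕ) * r (τ.1 l.castSucc) (τ.2 l))
    (J : EuclideanSpace ℝ (Fin d) → ℝ)
    (hJ : ∀ w, J w = ∑ τ : (Fin (H + 1) → S) × (Fin H → A), q τ w * Rew τ) :
    Differentiable ℝ J ∧
      ∀ w : EuclideanSpace ℝ (Fin d),
        gradient J w = ∑ τ : (Fin (H + 1) → S) × (Fin H → A),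
          q τ w • ∑ h : Fin H,
            Rtg h τ •
              gradient (fun v => Real.log (π (τ.2 h) (τ.1 h.castSucc) v)) w := by
  classical
  set D := InnerProductSpace.toDual ℝ (EuclideanSpace ℝ (Fin d)) with hD
  have hsm : ∀ (cc : ℝ) (x : EuclideanSpace ℝ (Fin d)), D (cc • x) = cc • D x := by
    intro cc x
    refine ContinuousLinearMap.ext fun y => ?_
    simp [hD, InnerProductSpace.toDual_apply_apply, real_inner_smul_left]
  have hgrad : ∀ (u : EuclideanSpace ℝ (Fin d) → ℝ) (v : EuclideanSpace ℝ (Fin d)),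
      D (gradient u v) = fderiv ℝ u v := by
    intro u v
    simp only [hD, gradient, LinearIsometryEquiv.apply_symm_apply]
  have hLd : ∀ (a : A) (s : S),
      Differentiable ℝ (fun v : EuclideanSpace ℝ (Fin d) => Real.log (π a s v)) :=
    fun a s => (hπC a s).differentiable one_ne_zero
  have hπ_eq : ∀ (a : A) (s : S) (v : EuclideanSpace ℝ (Fin d)),
      π a s v = Real.exp (Real.log (π a s v)) :=
    fun a s v => (Real.exp_log (hπ0 a s v)).symm
  have hπd : ∀ (a : A) (s : S) (w : EuclideanSpace ℝ (Fin d)),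
      HasFDerivAt (fun v => π a s v)
        (π a s w • fderiv ℝ (fun v => Real.log (π a s v)) w) w := by
    intro a s w
    have h2 := ((hLd a s w).hasFDerivAt).exp
    have hfun : (fun v : EuclideanSpace ℝ (Fin d) => Real.exp (Real.log (π a s v)))
        = fun v => π a s v := funext fun v => (hπ_eq a s v).symm
    rw [hfun, ← hπ_eq a s w] at h2
    exact h2
  have hscore : ∀ (s : S) (w : EuclideanSpace ℝ (Fin d)),
      ∑ a, π a s w • gradient (fun v => Real.log (π a s v)) w = 0 := by
    intro s w
    have h1 : HasFDerivAt (fun v : EuclideanSpace ℝ (Fin d) => ∑ a, π a s v)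
        (∑ a, π a s w • fderiv ℝ (fun v => Real.log (π a s v)) w) w :=
      HasFDerivAt.fun_sum fun a _ => hπd a s w
    have h2 : (fun v : EuclideanSpace ℝ (Fin d) => ∑ a, π a s v) = fun _ => (1 : ℝ) :=
      funext fun v => hπ1 s v
    rw [h2] at h1
    have h3 := h1.unique (hasFDerivAt_const 1 w)
    apply D.injective
    rw [map_sum, map_zero, ← h3]
    refine Finset.sum_congr rfl fun a _ => ?_
    rw [hsm, hgrad]
  have hq' : ∀ (τ : (Fin (H + 1) → S) × (Fin H → A)) (v : EuclideanSpace ℝ (Fin d)),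
      q τ v = (μ (τ.1 0) * ∏ h : Fin H, P (τ.1 h.castSucc) (τ.2 h) (τ.1 h.succ)) *
        Real.exp (∑ h : Fin H, Real.log (π (τ.2 h) (τ.1 h.castSucc) v)) := by
    intro τ v
    rw [hq, Real.exp_sum]
    rw [show ∏ h : Fin H, Real.exp (Real.log (π (τ.2 h) (τ.1 h.castSucc) v))
        = ∏ h : Fin H, π (τ.2 h) (τ.1 h.castSucc) v from
      Finset.prod_congr rfl fun h _ => (hπ_eq _ _ _).symm]
    ring
  have hstep : ∀ (τ : (Fin (H + 1) → S) × (Fin H → A)) (w : EuclideanSpace ℝ (Fin d)),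
      HasFDerivAt (fun v => q τ v * Rew τ)
        ((q τ w * Rew τ) •
          ∑ h : Fin H, fderiv ℝ (fun v => Real.log (π (τ.2 h) (τ.1 h.castSucc) v)) w) w := by
    intro τ w
    have h1 : HasFDerivAt
        (fun v : EuclideanSpace ℝ (Fin d) =>
          ∑ h : Fin H, Real.log (π (τ.2 h) (τ.1 h.castSucc) v))
        (∑ h : Fin H, fderiv ℝ (fun v => Real.log (π (τ.2 h) (τ.1 h.castSucc) v)) w) w :=
      HasFDerivAt.fun_sum fun h _ => (hLd _ _ w).hasFDerivAt
    have h2 := (h1.exp).const_mul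
      ((μ (τ.1 0) * ∏ h : Fin H, P (τ.1 h.castSucc) (τ.2 h) (τ.1 h.succ)) * Rew τ)
    have hfun : (fun v : EuclideanSpace ℝ (Fin d) =>
        ((μ (τ.1 0) * ∏ h : Fin H, P (τ.1 h.castSucc) (τ.2 h) (τ.1 h.succ)) * Rew τ) *
          Real.exp (∑ h : Fin H, Real.log (π (τ.2 h) (τ.1 h.castSucc) v)))
        = fun v => q τ v * Rew τ := funext fun v => by rw [hq' τ v]; ring
    have hcoef : q τ w * Rew τ =
        ((μ (τ.1 0) * ∏ h : Fin H, P (τ.1 h.castSucc) (τ.2 h) (τ.1 h.succ)) * Rew τ) *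
          Real.exp (∑ h : Fin H, Real.log (π (τ.2 h) (τ.1 h.castSucc) w)) := by
      rw [hq' τ w]; ring
    rw [hfun] at h2
    rw [hcoef, ← smul_smul]
    exact h2
  have hJd : ∀ w : EuclideanSpace ℝ (Fin d),
      HasFDerivAt J (∑ τ : (Fin (H + 1) → S) × (Fin H → A), (q τ w * Rew τ) •
        ∑ h : Fin H, fderiv ℝ (fun v => Real.log (π (τ.2 h) (τ.1 h.castSucc) v)) w) w := by
    intro w
    rw [funext hJ]
    exact HasFDerivAt.fun_sum fun τ _ => hstep τ w
  refine ⟨fun w => (hJd w).differentiableAt, fun w => ?_⟩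
  have hGrad : HasGradientAt J
      (∑ τ : (Fin (H + 1) → S) × (Fin H → A), (q τ w * Rew τ) •
        ∑ h : Fin H, gradient (fun v => Real.log (π (τ.2 h) (τ.1 h.castSucc) v)) w) w := by
    rw [hasGradientAt_iff_hasFDerivAt]
    have hDsum : D (∑ τ : (Fin (H + 1) → S) × (Fin H → A), (q τ w * Rew τ) •
          ∑ h : Fin H, gradient (fun v => Real.log (π (τ.2 h) (τ.1 h.castSucc) v)) w)
        = ∑ τ : (Fin (H + 1) → S) × (Fin H → A), (q τ w * Rew τ) •
          ∑ h : Fin H, fderiv ℝ (fun v => Real.log (π (τ.2 h) (τ.1 h.castSucc) v)) w := by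
      rw [map_sum]
      refine Finset.sum_congr rfl fun τ _ => ?_
      rw [hsm, map_sum]
      congr 1
      exact Finset.sum_congr rfl fun h _ => hgrad _ _
    rw [hDsum]
    exact hJd w
  rw [hGrad.gradient]
  have hvan : ∀ h : Fin H,
      ∑ τ : (Fin (H + 1) → S) × (Fin H → A),
        (q τ w * ∑ l ∈ Finset.univ.filter (fun l : Fin H => ¬ h ≤ l),
          γ ^ (l : ℕ) * r (τ.1 l.castSucc) (τ.2 l)) •
          gradient (fun v => Real.log (π (τ.2 h) (τ.1 h.castSucc) v)) w = 0 := by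
    intro h
    rw [Fintype.sum_prod_type]
    have hv := vanish (fun a s => π a s w) P
      (fun a s => gradient (fun v => Real.log (π a s v)) w)
      (fun s => hπ1 s w) hP1 (fun s => hscore s w) (h : ℕ) H h.isLt μ
      (fun s a => ∑ l ∈ Finset.univ.filter (fun l : Fin H => ¬ h ≤ l),
        γ ^ (l : ℕ) * r (s l.castSucc) (a l))
      (by
        intro s s' a a' hs ha
        refine Finset.sum_congr rfl fun l hl => ?_
        rw [Finset.mem_filter, not_le] at hl
        have hlh : (l : ℕ) < (h : ℕ) := hl.2
        rw [hs l.castSucc (by simpa using hlh.le), ha l hlh])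
    refine Eq.trans (Finset.sum_congr rfl fun s _ => Finset.sum_congr rfl fun a _ => ?_) hv
    congr 1
    · rw [hq]; ring
  have hsplit : ∀ (h : Fin H) (τ : (Fin (H + 1) → S) × (Fin H → A)),
      Rew τ = Rtg h τ + ∑ l ∈ Finset.univ.filter (fun l : Fin H => ¬ h ≤ l),
        γ ^ (l : ℕ) * r (τ.1 l.castSucc) (τ.2 l) := by
    intro h τ
    rw [hRew, hRtg]
    exact (Finset.sum_filter_add_sum_filter_not Finset.univ (fun l => h ≤ l) _).symm
  calc ∑ τ : (Fin (H + 1) → S) × (Fin H → A), (q τ w * Rew τ) •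
        ∑ h : Fin H, gradient (fun v => Real.log (π (τ.2 h) (τ.1 h.castSucc) v)) w
      = ∑ h : Fin H, ∑ τ : (Fin (H + 1) → S) × (Fin H → A), (q τ w * Rew τ) •
          gradient (fun v => Real.log (π (τ.2 h) (τ.1 h.castSucc) v)) w := by
        simp_rw [Finset.smul_sum]
        exact Finset.sum_comm
    _ = ∑ h : Fin H, ∑ τ : (Fin (H + 1) → S) × (Fin H → A), (q τ w * Rtg h τ) •
          gradient (fun v => Real.log (π (τ.2 h) (τ.1 h.castSucc) v)) w := by
        refine Finset.sum_congr rfl fun h _ => ?_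
        calc ∑ τ : (Fin (H + 1) → S) × (Fin H → A), (q τ w * Rew τ) •
              gradient (fun v => Real.log (π (τ.2 h) (τ.1 h.castSucc) v)) w
            = ∑ τ : (Fin (H + 1) → S) × (Fin H → A),
              ((q τ w * Rtg h τ) •
                gradient (fun v => Real.log (π (τ.2 h) (τ.1 h.castSucc) v)) w +
               (q τ w * ∑ l ∈ Finset.univ.filter (fun l : Fin H => ¬ h ≤ l),
                  γ ^ (l : ℕ) * r (τ.1 l.castSucc) (τ.2 l)) •
                gradient (fun v => Real.log (π (τ.2 h) (τ.1 h.castSucc) v)) w) := by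
              refine Finset.sum_congr rfl fun τ _ => ?_
              rw [← add_smul, ← mul_add, ← hsplit h τ]
          _ = (∑ τ : (Fin (H + 1) → S) × (Fin H → A), (q τ w * Rtg h τ) •
                gradient (fun v => Real.log (π (τ.2 h) (τ.1 h.castSucc) v)) w) +
              ∑ τ : (Fin (H + 1) → S) × (Fin H → A),
                (q τ w * ∑ l ∈ Finset.univ.filter (fun l : Fin H => ¬ h ≤ l),
                  γ ^ (l : ℕ) * r (τ.1 l.castSucc) (τ.2 l)) •
                gradient (fun v => Real.log (π (τ.2 h) (τ.1 h.castSucc) v)) w :=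
              Finset.sum_add_distrib
          _ = ∑ τ : (Fin (H + 1) → S) × (Fin H → A), (q τ w * Rtg h τ) •
                gradient (fun v => Real.log (π (τ.2 h) (τ.1 h.castSucc) v)) w := by
              rw [hvan h, add_zero]
    _ = ∑ τ : (Fin (H + 1) → S) × (Fin H → A), q τ w • ∑ h : Fin H, Rtg h τ •
          gradient (fun v => Real.log (π (τ.2 h) (τ.1 h.castSucc) v)) w := by
        rw [Finset.sum_comm]
        refine Finset.sum_congr rfl fun τ _ => ?_
        rw [Finset.smul_sum]
        exact Finset.sum_congr rfl fun h _ => by rw [smul_smul]
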